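/- There is no family of functions ⟨ℓ_α : ℕ → Ordinal⟩ indexed by α ≤ ω₁ together with strictly increasing maps σ^{αβ} : Ordinal → Ordinal for α < β ≤ ω₁ such that: (i) σ^{βγ} ∘ σ^{αβ} = σ^{αγ} whenever α < β < γ ≤ ω₁; (ii) for all α < β ≤ ω₁, ℓ_β ≤_lex σ^{αβ} ∘ ℓ_α (pointwise composition); and (iii) for every α < ω₁, ℓ_{α+1} <_lex σ^{α,α+1} ∘ ℓ_α (strict lexicographic inequality). -/

import Mathlib

noncomputable def omega1 : Ordinal := (Cardinal.aleph 1).ord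

/-- Strict lexicographic order on `ℕ → Ordinal`. -/
def LexLt (f g : ℕ → Ordinal) : Prop :=
  ∃ n, (∀ m < n, f m = g m) ∧ f n < g n

/-- Lexicographic (non-strict) order on `ℕ → Ordinal`. -/
def LexLe (f g : ℕ → Ordinal) : Prop := f = g ∨ LexLt f g

/-- There is no `ω₁`-length system of lexicographically strictly decreasing
functions with strictly increasing commuting maps. -/
theorem no_decreasing_system
    (ℓ : Ordinal → ℕ → Ordinal) (σ : Ordinal → Ordinal → Ordinal → Ordinal)
    (hmono : ∀ α β, α < β → β ≤ omega1 → StrictMono (σ α β))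
    (hcomm : ∀ α β γ, α < β → β < γ → γ ≤ omega1 →
      (σ β γ) ∘ (σ α β) = σ α γ)
    (hle : ∀ α β, α < β → β ≤ omega1 → LexLe (ℓ β) ((σ α β) ∘ (ℓ α)))
    (hlt : ∀ α, α < omega1 → LexLt (ℓ (α + 1)) ((σ α (α + 1)) ∘ (ℓ α))) :
    False := by
  have hlim : Order.IsSuccLimit omega1 := Cardinal.isSuccLimit_ord (Cardinal.aleph0_le_aleph 1)
  -- key induction: coordinates below `n` stabilize before a countable stage
  have key : ∀ n : ℕ, ∃ a, a < omega1 ∧ ∀ β γ, a ≤ β → β < γ → γ < omega1 →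
      ∀ m < n, ℓ γ m = σ β γ (ℓ β m) := by
    intro n
    induction n with
    | zero => exact ⟨0, hlim.pos, fun β γ _ _ _ m hm => absurd hm (Nat.not_lt_zero m)⟩
    | succ n ih =>
      obtain ⟨a, ha, hstab⟩ := ih
      have claim1 : ∀ β γ, a ≤ β → β < γ → γ < omega1 → ℓ γ n ≤ σ β γ (ℓ β n) := by
        intro β γ hβ hβγ hγ
        rcases hle β γ hβγ hγ.le with heq | ⟨k, hagree, hk⟩
        · exact le_of_eq (congrFun heq n)
        · rcases lt_trichotomy k n with h | rfl | h
          · rw [hstab β γ hβ hβγ hγ k h] at hk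
            exact absurd hk (lt_irrefl _)
          · exact hk.le
          · exact le_of_eq (hagree n h)
      set F : Ordinal → Ordinal := fun β => σ β omega1 (ℓ β n) with hF
      have hanti : ∀ β γ, a ≤ β → β < γ → γ < omega1 → F γ ≤ F β := by
        intro β γ hβ hβγ hγ
        have h2 := (hmono γ omega1 hγ le_rfl).monotone (claim1 β γ hβ hβγ hγ)
        calc F γ ≤ σ γ omega1 (σ β γ (ℓ β n)) := h2
          _ = F β := congrFun (hcomm β γ omega1 hβγ hγ le_rfl) (ℓ β n)
      set S : Set Ordinal := {v | ∃ β, a ≤ β ∧ β < omega1 ∧ F β = v} with hSdef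
      have hS : S.Nonempty := ⟨F a, a, le_rfl, ha, rfl⟩
      obtain ⟨v, ⟨a', ha'1, ha'2, hv⟩, hminv⟩ := Ordinal.lt_wf.has_min S hS
      have hFconst : ∀ β, a' ≤ β → β < omega1 → F β = F a' := by
        intro β hβ hβω
        have h1 : F β ≤ F a' := by
          rcases eq_or_lt_of_le hβ with rfl | h
          · exact le_rfl
          · exact hanti a' β ha'1 h hβω
        have h2 : ¬ F β < v := hminv (F β) ⟨β, ha'1.trans hβ, hβω, rfl⟩
        rw [← hv] at h2
        exact le_antisymm h1 (not_lt.mp h2)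
      refine ⟨a', ha'2, ?_⟩
      intro β γ hβ hβγ hγ m hm
      rcases Nat.lt_succ_iff_lt_or_eq.mp hm with h | h
      · exact hstab β γ (ha'1.trans hβ) hβγ hγ m h
      · rw [h]
        have e1 : F γ = F β :=
          (hFconst γ (hβ.trans hβγ.le) hγ).trans (hFconst β hβ (hβγ.trans hγ)).symm
        have e2 : σ γ omega1 (ℓ γ n) = σ γ omega1 (σ β γ (ℓ β n)) := by
          have e3 : F β = σ γ omega1 (σ β γ (ℓ β n)) :=
            (congrFun (hcomm β γ omega1 hβγ hγ le_rfl) (ℓ β n)).symm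
          exact e1.trans e3
        exact (hmono γ omega1 hγ le_rfl).injective e2
  choose a haω hstab using key
  set A : Ordinal := ⨆ n, a n with hA
  have hAω : A < omega1 := by
    have h := @Ordinal.iSup_lt_omega_one ℕ _ a (by rw [← Cardinal.ord_aleph]; exact haω)
    rwa [← Cardinal.ord_aleph] at h
  have hAle : ∀ n, a n ≤ A := Ordinal.le_iSup a
  have hAsucc : A + 1 < omega1 := by
    rw [Ordinal.add_one_eq_succ]; exact hlim.succ_lt hAω
  have hAlt : A < A + 1 := by
    rw [Ordinal.add_one_eq_succ]; exact Order.lt_succ A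
  have heq : ℓ (A + 1) = (σ A (A + 1)) ∘ (ℓ A) := by
    funext m
    exact hstab (m + 1) A (A + 1) (hAle (m + 1)) hAlt hAsucc m (Nat.lt_succ_self m)
  obtain ⟨k, _, hk⟩ := hlt A hAω
  rw [heq] at hk
  exact absurd hk (lt_irrefl _)
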